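/- For every separable bipartite quantum channel E from A₀B₀ to A₁B₁ with all four systems of dimension K, the overlap of normalized Choi matrices satisfies tr(J^{F^K} J^E) ≤ 1/K², where F^K is the K-swap channel. -/

import Mathlib

open scoped BigOperators Kronecker ComplexOrder
open Matrix Filter

noncomputable section

namespace DynEnt

/-- A (not necessarily linear) map between matrix spaces. -/
abbrev MatMap (ι₀ ι₁ : Type) : Type := Matrix ι₀ ι₀ ℂ → Matrix ι₁ ι₁ ℂ

/-- The map `L ⊗ id_ρ`, acting trivially on a reference system indexed by `ρ`. -/
def tensorIdT {ι₀ ι₁ ρ : Type} (L : MatMap ι₀ ι₁)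
    (X : Matrix (ι₀ × ρ) (ι₀ × ρ) ℂ) : Matrix (ι₁ × ρ) (ι₁ × ρ) ℂ :=
  Matrix.of fun p q => L (Matrix.of fun i j => X (i, p.2) (j, q.2)) p.1 q.1

def IsLinearFun {ι₀ ι₁ : Type} (L : MatMap ι₀ ι₁) : Prop :=
  ∀ (c : ℂ) (X Y : Matrix ι₀ ι₀ ℂ), L (c • X + Y) = c • L X + L Y

def IsCompletelyPositive {ι₀ ι₁ : Type} [Fintype ι₀] [Fintype ι₁] (L : MatMap ι₀ ι₁) : Prop :=
  ∀ (r : ℕ) (X : Matrix (ι₀ × Fin r) (ι₀ × Fin r) ℂ), X.PosSemidef → (tensorIdT L X).PosSemidef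

def IsTracePreserving {ι₀ ι₁ : Type} [Fintype ι₀] [Fintype ι₁] (L : MatMap ι₀ ι₁) : Prop :=
  ∀ X, (L X).trace = X.trace

/-- A quantum channel: a linear, completely positive, trace-preserving map. -/
def IsChannel {ι₀ ι₁ : Type} [Fintype ι₀] [Fintype ι₁] (L : MatMap ι₀ ι₁) : Prop :=
  IsLinearFun L ∧ IsCompletelyPositive L ∧ IsTracePreserving L

/-- Tensor product of two matrix maps, defined on matrix units and extended linearly. -/
def tensorMap {α₀ α₁ β₀ β₁ : Type} [Fintype α₀] [DecidableEq α₀] [Fintype β₀] [DecidableEq β₀]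
    (LA : MatMap α₀ α₁) (LB : MatMap β₀ β₁) : MatMap (α₀ × β₀) (α₁ × β₁) :=
  fun X => ∑ i : α₀, ∑ j : α₀, ∑ k : β₀, ∑ l : β₀,
    X (i, k) (j, l) • (LA (Matrix.single i j 1) ⊗ₖ LB (Matrix.single k l 1))

/-- Separable bipartite channel (cut `α : β`). -/
def IsSepChannel {α₀ β₀ α₁ β₁ : Type}
    [Fintype α₀] [DecidableEq α₀] [Fintype β₀] [DecidableEq β₀] [Fintype α₁] [Fintype β₁]
    (N : MatMap (α₀ × β₀) (α₁ × β₁)) : Prop :=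
  IsChannel N ∧ ∃ (n : ℕ) (LA : Fin n → MatMap α₀ α₁) (LB : Fin n → MatMap β₀ β₁),
    (∀ k, IsLinearFun (LA k) ∧ IsCompletelyPositive (LA k) ∧
          IsLinearFun (LB k) ∧ IsCompletelyPositive (LB k)) ∧
    ∀ X, N X = ∑ k, tensorMap (LA k) (LB k) X

/-- The former Mathlib `Matrix.PosSemidef.sqrt` (removed), with its old definition. -/
def posSemidefSqrt {ι : Type} [Fintype ι] [DecidableEq ι] {A : Matrix ι ι ℂ}
    (hA : A.PosSemidef) : Matrix ι ι ℂ :=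
  (hA.1.eigenvectorUnitary : Matrix ι ι ℂ) *
    Matrix.diagonal ((↑) ∘ Real.sqrt ∘ hA.1.eigenvalues) *
    (star hA.1.eigenvectorUnitary : Matrix ι ι ℂ)

/-- Trace norm `‖X‖₁ = tr √(X† X)`. -/
def traceNorm {ι : Type} [Fintype ι] [DecidableEq ι] (X : Matrix ι ι ℂ) : ℝ :=
  (posSemidefSqrt (Matrix.posSemidef_conjTranspose_mul_self X)).trace.re

/-- Density matrix. -/
def IsState {ι : Type} [Fintype ι] (ρ : Matrix ι ι ℂ) : Prop :=
  ρ.PosSemidef ∧ ρ.trace = 1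

/-- Pure state (rank-one density matrix). -/
def IsPureState {ι : Type} [Fintype ι] (ρ : Matrix ι ι ℂ) : Prop :=
  ∃ v : ι → ℂ, (∑ i, Complex.normSq (v i)) = 1 ∧
    ρ = Matrix.vecMulVec v (fun i => star (v i))

/-- Diamond norm. -/
def diamondNorm {ι₀ ι₁ : Type} [Fintype ι₀] [Fintype ι₁] [DecidableEq ι₁]
    (L : MatMap ι₀ ι₁) : ℝ :=
  sSup { t : ℝ | ∃ (r : ℕ) (ρ : Matrix (ι₀ × Fin r) (ι₀ × Fin r) ℂ),
    ρ.PosSemidef ∧ ρ.trace = 1 ∧ t = traceNorm (tensorIdT L ρ) }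

section Bipartite

variable {α₀ β₀ α₁ β₁ α₀' β₀' α₁' β₁' : Type}
variable [Fintype α₀] [DecidableEq α₀] [Fintype β₀] [DecidableEq β₀]
variable [Fintype α₁] [DecidableEq α₁] [Fintype β₁] [DecidableEq β₁]
variable [Fintype α₀'] [DecidableEq α₀'] [Fintype β₀'] [DecidableEq β₀']
variable [Fintype α₁'] [DecidableEq α₁'] [Fintype β₁'] [DecidableEq β₁']

/-- Standard robustness w.r.t. separable channels. -/
def stdRobustness (N : MatMap (α₀ × β₀) (α₁ × β₁)) : ℝ :=
  sInf { s : ℝ | 0 ≤ s ∧ ∃ M : MatMap (α₀ × β₀) (α₁ × β₁), IsSepChannel M ∧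
    IsSepChannel (fun X => (1 + s)⁻¹ • (N X + s • M X)) }

/-- Generalized robustness w.r.t. separable channels. -/
def genRobustness (N : MatMap (α₀ × β₀) (α₁ × β₁)) : ℝ :=
  sInf { s : ℝ | 0 ≤ s ∧ ∃ M : MatMap (α₀ × β₀) (α₁ × β₁), IsChannel M ∧
    IsSepChannel (fun X => (1 + s)⁻¹ • (N X + s • M X)) }

/-- Standard log-robustness. -/
def LRs (N : MatMap (α₀ × β₀) (α₁ × β₁)) : ℝ := Real.logb 2 (1 + stdRobustness N)

/-- Generalized log-robustness. -/
def LRgen (N : MatMap (α₀ × β₀) (α₁ × β₁)) : ℝ := Real.logb 2 (1 + genRobustness N)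

/-- Smooth standard log-robustness. -/
def smoothLRs (ε : ℝ) (N : MatMap (α₀ × β₀) (α₁ × β₁)) : ℝ :=
  sInf { t : ℝ | ∃ N' : MatMap (α₀ × β₀) (α₁ × β₁), IsChannel N' ∧
    (1/2) * diamondNorm (fun X => N' X - N X) ≤ ε ∧ t = LRs N' }

/-- Smooth generalized log-robustness. -/
def smoothLRgen (ε : ℝ) (N : MatMap (α₀ × β₀) (α₁ × β₁)) : ℝ :=
  sInf { t : ℝ | ∃ N' : MatMap (α₀ × β₀) (α₁ × β₁), IsChannel N' ∧
    (1/2) * diamondNorm (fun X => N' X - N X) ≤ ε ∧ t = LRgen N' }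

end Bipartite

/-- A superchannel, given by pre- and post-processing channels with a memory system `Fin e`. -/
structure Superchannel (α₀ β₀ α₁ β₁ α₀' β₀' α₁' β₁' : Type)
    [Fintype α₀] [Fintype β₀] [Fintype α₁] [Fintype β₁]
    [Fintype α₀'] [Fintype β₀'] [Fintype α₁'] [Fintype β₁'] : Type where
  e : ℕ
  pre : MatMap (α₀' × β₀') ((α₀ × β₀) × Fin e)
  post : MatMap ((α₁ × β₁) × Fin e) (α₁' × β₁')
  pre_channel : IsChannel pre
  post_channel : IsChannel post

section Super

variable {α₀ β₀ α₁ β₁ α₀' β₀' α₁' β₁' : Type}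
variable [Fintype α₀] [DecidableEq α₀] [Fintype β₀] [DecidableEq β₀]
variable [Fintype α₁] [DecidableEq α₁] [Fintype β₁] [DecidableEq β₁]
variable [Fintype α₀'] [DecidableEq α₀'] [Fintype β₀'] [DecidableEq β₀']
variable [Fintype α₁'] [DecidableEq α₁'] [Fintype β₁'] [DecidableEq β₁']

/-- Action of a superchannel on a channel: `Θ[E] = post ∘ (E ⊗ id) ∘ pre`. -/
def Superchannel.apply (Θ : Superchannel α₀ β₀ α₁ β₁ α₀' β₀' α₁' β₁')
    (E : MatMap (α₀ × β₀) (α₁ × β₁)) : MatMap (α₀' × β₀') (α₁' × β₁') :=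
  fun X => Θ.post (tensorIdT E (Θ.pre X))

/-- Separability-preserving superchannel. -/
def IsSEPPSC (Θ : Superchannel α₀ β₀ α₁ β₁ α₀' β₀' α₁' β₁') : Prop :=
  ∀ M : MatMap (α₀ × β₀) (α₁ × β₁), IsSepChannel M → IsSepChannel (Θ.apply M)

/-- δ-separability-preserving superchannel. -/
def IsDeltaSEPPSC (δ : ℝ) (Θ : Superchannel α₀ β₀ α₁ β₁ α₀' β₀' α₁' β₁') : Prop :=
  ∀ M : MatMap (α₀ × β₀) (α₁ × β₁), IsSepChannel M → genRobustness (Θ.apply M) ≤ δ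

end Super

/-- The swap unitary `F = Σ |ij⟩⟨ji|` on `ℂ^K ⊗ ℂ^K`. -/
def swapMatrix (K : ℕ) : Matrix (Fin K × Fin K) (Fin K × Fin K) ℂ :=
  Matrix.of fun p q => if p.1 = q.2 ∧ p.2 = q.1 then 1 else 0

/-- The `K`-swap channel `X ↦ F X F†`. -/
def swapChannel (K : ℕ) : MatMap (Fin K × Fin K) (Fin K × Fin K) :=
  fun X => swapMatrix K * X * (swapMatrix K)ᴴ

/-- The density matrix of the `K`-maximally entangled state inside `ℂ^{dA} ⊗ ℂ^{dB}`. -/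
def maxEntangled (dA dB K : ℕ) : Matrix (Fin dA × Fin dB) (Fin dA × Fin dB) ℂ :=
  Matrix.of fun p q =>
    if (p.1 : ℕ) = (p.2 : ℕ) ∧ (q.1 : ℕ) = (q.2 : ℕ) ∧ (p.1 : ℕ) < K ∧ (q.1 : ℕ) < K
    then (1 / K : ℂ) else 0

/-- Separable bipartite state. -/
def IsSepState {ιA ιB : Type} [Fintype ιA] [Fintype ιB]
    (σ : Matrix (ιA × ιB) (ιA × ιB) ℂ) : Prop :=
  ∃ (n : ℕ) (p : Fin n → ℝ) (φ : Fin n → ιA → ℂ) (ψ : Fin n → ιB → ℂ),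
    (∀ a, 0 ≤ p a) ∧ (∑ a, p a) = 1 ∧
    (∀ a, (∑ i, Complex.normSq (φ a i)) = 1) ∧
    (∀ a, (∑ i, Complex.normSq (ψ a i)) = 1) ∧
    σ = ∑ a, (p a : ℂ) •
      (Matrix.vecMulVec (φ a) (fun i => star (φ a i)) ⊗ₖ
       Matrix.vecMulVec (ψ a) (fun i => star (ψ a i)))

/-- Input state `Φ^{a₀}_{A₀Ã₀} ⊗ Φ^{b₀}_{B₀B̃₀}` for the Choi matrix, with index
grouping `(A₀ × B₀) × (Ã₀ × B̃₀)`. -/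
def choiInput (a₀ b₀ : ℕ) :
    Matrix ((Fin a₀ × Fin b₀) × (Fin a₀ × Fin b₀)) ((Fin a₀ × Fin b₀) × (Fin a₀ × Fin b₀)) ℂ :=
  Matrix.of fun p q =>
    maxEntangled a₀ a₀ a₀ (p.1.1, p.2.1) (q.1.1, q.2.1) *
    maxEntangled b₀ b₀ b₀ (p.1.2, p.2.2) (q.1.2, q.2.2)

/-- Normalized Choi matrix of a bipartite channel. -/
def choiBi {a₀ b₀ : ℕ} {ι₁ : Type} (E : MatMap (Fin a₀ × Fin b₀) ι₁) :
    Matrix (ι₁ × (Fin a₀ × Fin b₀)) (ι₁ × (Fin a₀ × Fin b₀)) ℂ :=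
  tensorIdT E (choiInput a₀ b₀)

/-- Normalized Choi matrix of a single-system channel. -/
def choi1 {d : ℕ} {ι₁ : Type} (N : MatMap (Fin d) ι₁) :
    Matrix (ι₁ × Fin d) (ι₁ × Fin d) ℂ :=
  tensorIdT N (maxEntangled d d d)

open Classical in
/-- Square root of a matrix (positive semidefinite case, junk value `0` otherwise). -/
def matSqrt {ι : Type} [Fintype ι] [DecidableEq ι] (A : Matrix ι ι ℂ) : Matrix ι ι ℂ :=
  if h : A.PosSemidef then posSemidefSqrt h else 0

/-- Fidelity `F(ρ,σ) = (tr √(√ρ σ √ρ))²`. -/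
def fidelity {ι : Type} [Fintype ι] [DecidableEq ι] (ρ σ : Matrix ι ι ℂ) : ℝ :=
  ((matSqrt (matSqrt ρ * σ * matSqrt ρ)).trace.re) ^ 2

section OpTasks

variable {α₀ β₀ α₁ β₁ α₀' β₀' α₁' β₁' : Type}
variable [Fintype α₀] [DecidableEq α₀] [Fintype β₀] [DecidableEq β₀]
variable [Fintype α₁] [DecidableEq α₁] [Fintype β₁] [DecidableEq β₁]
variable [Fintype α₀'] [DecidableEq α₀'] [Fintype β₀'] [DecidableEq β₀']
variable [Fintype α₁'] [DecidableEq α₁'] [Fintype β₁'] [DecidableEq β₁']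

/-- One-shot dynamic entanglement cost under SEPPSC. -/
def oneShotCostSEPP (ε : ℝ) (N : MatMap (α₀ × β₀) (α₁ × β₁)) : ℝ :=
  sInf { t : ℝ | ∃ (K : ℕ) (Θ : Superchannel (Fin K) (Fin K) (Fin K) (Fin K) α₀ β₀ α₁ β₁),
    IsSEPPSC Θ ∧
    (1/2) * diamondNorm (fun X => Θ.apply (swapChannel K) X - N X) ≤ ε ∧
    t = Real.logb 2 ((K : ℝ) ^ 2) }

/-- One-shot distillable dynamic entanglement under SEPPSC. -/
def oneShotDistillSEPP (ε : ℝ) (N : MatMap (α₀ × β₀) (α₁ × β₁)) : ℝ :=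
  sSup { t : ℝ | ∃ (K : ℕ) (Θ : Superchannel α₀ β₀ α₁ β₁ (Fin K) (Fin K) (Fin K) (Fin K)),
    IsSEPPSC Θ ∧
    (1/2) * diamondNorm (fun X => Θ.apply N X - swapChannel K X) ≤ ε ∧
    t = Real.logb 2 ((K : ℝ) ^ 2) }

/-- Hypothesis-testing relative entropy of dynamic entanglement. -/
def EH (ε : ℝ) (N : MatMap (α₀ × β₀) (α₁ × β₁)) : ℝ :=
  sSup { t : ℝ | ∃ (r : ℕ) (Ψ : Matrix ((α₀ × β₀) × Fin r) ((α₀ × β₀) × Fin r) ℂ)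
      (Q : Matrix ((α₁ × β₁) × Fin r) ((α₁ × β₁) × Fin r) ℂ),
    IsPureState Ψ ∧ Q.PosSemidef ∧ ((1 : Matrix ((α₁ × β₁) × Fin r) ((α₁ × β₁) × Fin r) ℂ) - Q).PosSemidef ∧
    1 - ε ≤ ((tensorIdT N Ψ * Q).trace).re ∧
    t = sInf { u : ℝ | ∃ M : MatMap (α₀ × β₀) (α₁ × β₁), IsSepChannel M ∧
        u = - Real.logb 2 (((tensorIdT M Ψ * Q).trace).re) } }

end OpTasks

/-- Reindexing a matrix map along equivalences of index types. -/
def reindexMap {ι₀ ι₁ κ₀ κ₁ : Type} (e₀ : ι₀ ≃ κ₀) (e₁ : ι₁ ≃ κ₁) (L : MatMap ι₀ ι₁) :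
    MatMap κ₀ κ₁ :=
  fun X => Matrix.reindex e₁ e₁ (L (Matrix.reindex e₀.symm e₀.symm X))

section Cat

variable {α₀ β₀ α₁ β₁ : Type}
variable [Fintype α₀] [DecidableEq α₀] [Fintype β₀] [DecidableEq β₀]
variable [Fintype α₁] [DecidableEq α₁] [Fintype β₁] [DecidableEq β₁]

/-- `N ⊗ F^L` as a bipartite channel for the cut `A C : B D` (catalyst `CD` of dimension `L×L`). -/
def tensorSwapCut (N : MatMap (α₀ × β₀) (α₁ × β₁)) (L : ℕ) :
    MatMap ((α₀ × Fin L) × (β₀ × Fin L)) ((α₁ × Fin L) × (β₁ × Fin L)) :=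
  reindexMap (Equiv.prodProdProdComm α₀ β₀ (Fin L) (Fin L))
             (Equiv.prodProdProdComm α₁ β₁ (Fin L) (Fin L))
             (tensorMap N (swapChannel L))

/-- One-shot catalytic dynamic entanglement cost under δ-SEPPSC. -/
def catalyticCost (δ ε : ℝ) (N : MatMap (α₀ × β₀) (α₁ × β₁)) : ℝ :=
  sInf { t : ℝ | ∃ (K L : ℕ)
      (Θ : Superchannel (Fin K × Fin L) (Fin K × Fin L) (Fin K × Fin L) (Fin K × Fin L)
            (α₀ × Fin L) (β₀ × Fin L) (α₁ × Fin L) (β₁ × Fin L)),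
    IsDeltaSEPPSC δ Θ ∧
    ∃ N' : MatMap (α₀ × β₀) (α₁ × β₁), IsChannel N' ∧
      (1/2) * diamondNorm (fun X => N' X - N X) ≤ ε ∧
      Θ.apply (tensorSwapCut (swapChannel K) L) = tensorSwapCut N' L ∧
      t = Real.logb 2 ((K : ℝ) ^ 2) }

end Cat

/-- Discrete Weyl operators on `ℂ^K`. -/
def weyl (K : ℕ) (k l : Fin K) : Matrix (Fin K) (Fin K) ℂ :=
  Matrix.of fun a s =>
    if (a : ℕ) = ((k : ℕ) + (s : ℕ)) % K
    then Complex.exp (2 * (Real.pi : ℂ) * Complex.I * ((s : ℕ) : ℂ) * ((l : ℕ) : ℂ) / (K : ℂ))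
    else 0

/-- `n`-fold tensor power of a matrix. -/
def matPow {ι : Type} [Fintype ι] (X : Matrix ι ι ℂ) (n : ℕ) :
    Matrix (Fin n → ι) (Fin n → ι) ℂ :=
  Matrix.of fun f g => ∏ t, X (f t) (g t)

/-- `n`-fold tensor power of a matrix map. -/
def powMap {ι₀ ι₁ : Type} [Fintype ι₀] [DecidableEq ι₀] (L : MatMap ι₀ ι₁) (n : ℕ) :
    MatMap (Fin n → ι₀) (Fin n → ι₁) :=
  fun X => Matrix.of fun f' g' => ∑ f : Fin n → ι₀, ∑ g : Fin n → ι₀,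
    X f g * ∏ t, L (Matrix.single (f t) (g t) 1) (f' t) (g' t)

section Pow

variable {α₀ β₀ α₁ β₁ : Type}
variable [Fintype α₀] [DecidableEq α₀] [Fintype β₀] [DecidableEq β₀]
variable [Fintype α₁] [DecidableEq α₁] [Fintype β₁] [DecidableEq β₁]

/-- `n`-fold tensor power of a bipartite channel, with cut `A^n : B^n`. -/
def powBi (N : MatMap (α₀ × β₀) (α₁ × β₁)) (n : ℕ) :
    MatMap ((Fin n → α₀) × (Fin n → β₀)) ((Fin n → α₁) × (Fin n → β₁)) :=
  reindexMap (Equiv.arrowProdEquivProdArrow (Fin n) (fun _ => α₀) (fun _ => β₀))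
             (Equiv.arrowProdEquivProdArrow (Fin n) (fun _ => α₁) (fun _ => β₁))
             (powMap N n)

/-- `φ^{⊗n}` of a bipartite input-reference state, regrouped as
`((A₀ⁿ × B₀ⁿ) × refⁿ)`. -/
def phiPow (n : ℕ)
    (φ : Matrix ((α₀ × β₀) × (α₀ × β₀)) ((α₀ × β₀) × (α₀ × β₀)) ℂ) :
    Matrix (((Fin n → α₀) × (Fin n → β₀)) × (Fin n → (α₀ × β₀)))
           (((Fin n → α₀) × (Fin n → β₀)) × (Fin n → (α₀ × β₀))) ℂ :=
  Matrix.reindex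
    ((Equiv.arrowProdEquivProdArrow (Fin n) (fun _ => α₀ × β₀) (fun _ => α₀ × β₀)).trans
      (Equiv.prodCongr (Equiv.arrowProdEquivProdArrow (Fin n) (fun _ => α₀) (fun _ => β₀)) (Equiv.refl _)))
    ((Equiv.arrowProdEquivProdArrow (Fin n) (fun _ => α₀ × β₀) (fun _ => α₀ × β₀)).trans
      (Equiv.prodCongr (Equiv.arrowProdEquivProdArrow (Fin n) (fun _ => α₀) (fun _ => β₀)) (Equiv.refl _)))
    (matPow φ n)

end Pow

open Classical in
/-- Base-2 matrix logarithm via the spectral decomposition (junk value `0` if not Hermitian). -/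
def matLogb2 {ι : Type} [Fintype ι] [DecidableEq ι] (A : Matrix ι ι ℂ) : Matrix ι ι ℂ :=
  if h : A.IsHermitian then
    (h.eigenvectorUnitary : Matrix ι ι ℂ) *
      Matrix.diagonal (fun i => ((Real.logb 2 (h.eigenvalues i) : ℝ) : ℂ)) *
      (star h.eigenvectorUnitary : Matrix ι ι ℂ)
  else 0

/-- Umegaki relative entropy `D(ρ‖σ) = tr ρ (log₂ ρ − log₂ σ)`. -/
def relEnt {ι : Type} [Fintype ι] [DecidableEq ι] (ρ σ : Matrix ι ι ℂ) : ℝ :=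
  ((ρ * (matLogb2 ρ - matLogb2 σ)).trace).re

section Liberal

variable {α₀ β₀ α₁ β₁ : Type}
variable [Fintype α₀] [DecidableEq α₀] [Fintype β₀] [DecidableEq β₀]
variable [Fintype α₁] [DecidableEq α₁] [Fintype β₁] [DecidableEq β₁]

/-- Zero-error one-shot dynamic entanglement cost under SEPPSC. -/
def zeroCostSEPP (N : MatMap (α₀ × β₀) (α₁ × β₁)) : ℝ :=
  sInf { t : ℝ | ∃ (K : ℕ) (Θ : Superchannel (Fin K) (Fin K) (Fin K) (Fin K) α₀ β₀ α₁ β₁),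
    IsSEPPSC Θ ∧ Θ.apply (swapChannel K) = N ∧ t = Real.logb 2 ((K : ℝ) ^ 2) }

/-- Liberal (asymptotic) dynamic entanglement cost under SEPPSC. -/
def liberalCost (N : MatMap (α₀ × β₀) (α₁ × β₁)) : ℝ :=
  limUnder (nhdsWithin (0 : ℝ) (Set.Ioi 0)) (fun ε : ℝ =>
    liminf (fun n : ℕ =>
      (1 / (n : ℝ)) * sSup { t : ℝ |
        ∃ φ : Matrix ((α₀ × β₀) × (α₀ × β₀)) ((α₀ × β₀) × (α₀ × β₀)) ℂ, IsState φ ∧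
          t = sInf { u : ℝ |
            ∃ N'' : MatMap ((Fin n → α₀) × (Fin n → β₀)) ((Fin n → α₁) × (Fin n → β₁)),
              IsChannel N'' ∧
              (1/2) * traceNorm
                (tensorIdT N'' (phiPow n φ) - tensorIdT (powBi N n) (phiPow n φ)) ≤ ε ∧
              u = zeroCostSEPP N'' } }) atTop)

/-- Liberal regularized relative entropy with respect to separable channels. -/
def liberalRelEnt (N : MatMap (α₀ × β₀) (α₁ × β₁)) : ℝ :=
  limUnder atTop (fun n : ℕ =>
    (1 / (n : ℝ)) * sSup { t : ℝ |
      ∃ φ : Matrix ((α₀ × β₀) × (α₀ × β₀)) ((α₀ × β₀) × (α₀ × β₀)) ℂ, IsState φ ∧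
        t = sInf { u : ℝ | ∃ M : MatMap (α₀ × β₀) (α₁ × β₁), IsSepChannel M ∧
          u = relEnt (tensorIdT (powBi N n) (phiPow n φ))
                     (tensorIdT (powBi M n) (phiPow n φ)) } })

end Liberal





section Stmt15Aux

lemma swapMatrix_apply' (K : ℕ) (p q : Fin K × Fin K) :
    swapMatrix K p q = if q = p.swap then 1 else 0 := by
  have h : (p.1 = q.2 ∧ p.2 = q.1) ↔ q = p.swap := by
    constructor
    · rintro ⟨h1, h2⟩; exact Prod.ext h2.symm h1.symm
    · rintro rfl; exact ⟨rfl, rfl⟩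
  simp only [swapMatrix, Matrix.of_apply, h]

lemma swapChannel_apply' (K : ℕ) (X : Matrix (Fin K × Fin K) (Fin K × Fin K) ℂ)
    (p q : Fin K × Fin K) : swapChannel K X p q = X p.swap q.swap := by
  simp [swapChannel, Matrix.mul_apply, swapMatrix_apply', Matrix.conjTranspose_apply,
    apply_ite (star : ℂ → ℂ), ite_mul, mul_ite, Finset.sum_ite_eq, Finset.sum_ite_eq']

lemma maxEntangled_self_apply (K : ℕ) (p q : Fin K × Fin K) :
    maxEntangled K K K p q = if p.1 = p.2 ∧ q.1 = q.2 then (K:ℂ)⁻¹ else 0 := by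
  simp only [maxEntangled, Matrix.of_apply, Fin.is_lt, and_true, Fin.val_inj, one_div]

lemma choiInput_inner {K : ℕ} (r s : Fin K × Fin K) :
    (Matrix.of fun a b => choiInput K K (a, r) (b, s))
      = (((K:ℂ)^2)⁻¹) • Matrix.single r s (1:ℂ) := by
  ext a b
  simp only [choiInput, Matrix.of_apply, maxEntangled_self_apply, Matrix.smul_apply,
    Matrix.single, smul_eq_mul]
  by_cases h1 : a.1 = r.1 ∧ b.1 = s.1 <;> by_cases h2 : a.2 = r.2 ∧ b.2 = s.2
  · rw [if_pos ⟨h1.1, h1.2⟩, if_pos ⟨h2.1, h2.2⟩,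
      if_pos ⟨Prod.ext h1.1.symm h2.1.symm, Prod.ext h1.2.symm h2.2.symm⟩]
    rw [mul_one, ← mul_inv, sq]
  · rw [if_pos ⟨h1.1, h1.2⟩, if_neg (by simpa using h2), if_neg, mul_zero, mul_zero]
    rintro ⟨rfl, rfl⟩; exact h2 ⟨rfl, rfl⟩
  · rw [if_neg (by simpa using h1), zero_mul, if_neg, mul_zero]
    rintro ⟨rfl, rfl⟩; exact h1 ⟨rfl, rfl⟩
  · rw [if_neg (by simpa using h1), zero_mul, if_neg, mul_zero]
    rintro ⟨rfl, rfl⟩; exact h1 ⟨rfl, rfl⟩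

lemma choiBi_apply' {K : ℕ} {ι₁ : Type} (L : MatMap (Fin K × Fin K) ι₁)
    (p q : ι₁ × (Fin K × Fin K)) :
    choiBi L p q = L ((((K:ℂ)^2)⁻¹) • Matrix.single p.2 q.2 (1:ℂ)) p.1 q.1 := by
  rw [show choiBi L p q
      = L (Matrix.of fun i j => choiInput K K (i, p.2) (j, q.2)) p.1 q.1 from rfl,
    choiInput_inner]

lemma tensorMap_smul_std {α₀ α₁ β₀ β₁ : Type} [Fintype α₀] [DecidableEq α₀]
    [Fintype β₀] [DecidableEq β₀]
    (LA : MatMap α₀ α₁) (LB : MatMap β₀ β₁) (c : ℂ) (s r : α₀ × β₀) :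
    tensorMap LA LB (c • Matrix.single s r 1)
      = c • (LA (Matrix.single s.1 r.1 1) ⊗ₖ LB (Matrix.single s.2 r.2 1)) := by
  unfold tensorMap
  rw [Fintype.sum_eq_single s.1, Fintype.sum_eq_single r.1, Fintype.sum_eq_single s.2,
    Fintype.sum_eq_single r.2]
  · simp [Matrix.single, smul_smul]
  · intro l hl
    simp [Matrix.single, Prod.ext_iff, (Ne.symm hl)]
  · intro k hk
    simp [Matrix.single, Prod.ext_iff, (Ne.symm hk)]
  · intro j hj
    simp [Matrix.single, Prod.ext_iff, (Ne.symm hj)]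
  · intro i hi
    simp [Matrix.single, Prod.ext_iff, (Ne.symm hi)]

lemma tensorMap_std {α₀ α₁ β₀ β₁ : Type} [Fintype α₀] [DecidableEq α₀]
    [Fintype β₀] [DecidableEq β₀]
    (LA : MatMap α₀ α₁) (LB : MatMap β₀ β₁) (s r : α₀ × β₀) :
    tensorMap LA LB (Matrix.single s r 1)
      = LA (Matrix.single s.1 r.1 1) ⊗ₖ LB (Matrix.single s.2 r.2 1) := by
  have h := tensorMap_smul_std LA LB 1 s r
  simpa using h

lemma posSemidef_vecMulVec {ι : Type} [Fintype ι] (v : ι → ℂ) :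
    (Matrix.vecMulVec v (star v)).PosSemidef := by
  rw [Matrix.vecMulVec_eq Unit, ← Matrix.conjTranspose_replicateCol]
  exact Matrix.posSemidef_self_mul_conjTranspose _

lemma posSemidef_KmaxEnt (K : ℕ) (hK : 1 ≤ K) :
    ((K:ℂ) • maxEntangled K K K).PosSemidef := by
  have hK0 : (K:ℂ) ≠ 0 := Nat.cast_ne_zero.mpr (by omega)
  have h : (K:ℂ) • maxEntangled K K K
      = Matrix.vecMulVec (fun p : Fin K × Fin K => if p.1 = p.2 then 1 else 0)
          (star fun p : Fin K × Fin K => if p.1 = p.2 then 1 else 0) := by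
    ext p q
    simp only [Matrix.smul_apply, maxEntangled_self_apply, Matrix.vecMulVec_apply,
      Pi.star_apply, apply_ite (star : ℂ → ℂ), star_one, star_zero, smul_eq_mul]
    by_cases h1 : p.1 = p.2 <;> by_cases h2 : q.1 = q.2 <;>
      simp [h1, h2, mul_inv_cancel₀ hK0]
  rw [h]
  exact posSemidef_vecMulVec _

lemma tensorIdT_KmaxEnt {K : ℕ} (hK : 1 ≤ K) {ι₁ : Type} (L : MatMap (Fin K) ι₁)
    (p q : ι₁ × Fin K) :
    tensorIdT L ((K:ℂ) • maxEntangled K K K) p q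
      = L (Matrix.single p.2 q.2 1) p.1 q.1 := by
  have hK0 : (K:ℂ) ≠ 0 := Nat.cast_ne_zero.mpr (by omega)
  show L (Matrix.of fun i j => ((K:ℂ) • maxEntangled K K K) (i, p.2) (j, q.2)) p.1 q.1 = _
  congr 1
  ext a b
  simp only [Matrix.of_apply, Matrix.smul_apply, maxEntangled_self_apply, smul_eq_mul,
    Matrix.single]
  by_cases h1 : a = p.2 <;> by_cases h2 : b = q.2 <;>
    simp [h1, h2, mul_inv_cancel₀ hK0, eq_comm]

open scoped MatrixOrder Matrix.Norms.L2Operator in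
lemma psd_exists_conjTranspose_mul {ι : Type} [Fintype ι] [DecidableEq ι] {A : Matrix ι ι ℂ}
    (hA : A.PosSemidef) : ∃ B : Matrix ι ι ℂ, A = Bᴴ * B := by
  obtain ⟨B, hB⟩ := CStarAlgebra.nonneg_iff_eq_star_mul_self.mp hA.nonneg
  exact ⟨B, hB⟩

lemma cs_complex {ι : Type} [Fintype ι] (f g : ι → ℂ) :
    Complex.normSq (∑ i, f i * g i)
      ≤ (∑ i, Complex.normSq (f i)) * (∑ i, Complex.normSq (g i)) := by
  simp only [← Complex.sq_norm]
  calc ‖∑ i, f i * g i‖ ^ 2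
      ≤ (∑ i, ‖f i‖ * ‖g i‖) ^ 2 := by
        have h1 : ‖∑ i, f i * g i‖
            ≤ ∑ i, ‖f i‖ * ‖g i‖ := by
          refine le_trans (norm_sum_le _ _) ?_
          simp
        exact pow_le_pow_left₀ (norm_nonneg _) h1 2
    _ ≤ (∑ i, ‖f i‖ ^ 2) * (∑ i, ‖g i‖ ^ 2) :=
        Finset.sum_mul_sq_le_sq_mul_sq _ _ _

lemma sum_comm3 {a b c : Type} [Fintype a] [Fintype b] [Fintype c]
    {M : Type} [AddCommMonoid M] (f : a → b → c → M) :
    ∑ x : a, ∑ y : b, ∑ z : c, f x y z = ∑ z : c, ∑ y : b, ∑ x : a, f x y z :=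
  calc ∑ x : a, ∑ y : b, ∑ z : c, f x y z
      = ∑ y : b, ∑ x : a, ∑ z : c, f x y z := Finset.sum_comm
    _ = ∑ y : b, ∑ z : c, ∑ x : a, f x y z :=
        Finset.sum_congr rfl fun _ _ => Finset.sum_comm
    _ = ∑ z : c, ∑ y : b, ∑ x : a, f x y z := Finset.sum_comm

lemma sum_comm4 {a b c d : Type} [Fintype a] [Fintype b] [Fintype c] [Fintype d]
    {M : Type} [AddCommMonoid M] (f : a → b → c → d → M) :
    ∑ w : a, ∑ x : b, ∑ y : c, ∑ z : d, f w x y z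
      = ∑ y : c, ∑ z : d, ∑ w : a, ∑ x : b, f w x y z := by
  calc ∑ w : a, ∑ x : b, ∑ y : c, ∑ z : d, f w x y z
      = ∑ p : a × b, ∑ q : c × d, f p.1 p.2 q.1 q.2 := by
        simp only [Fintype.sum_prod_type]
    _ = ∑ q : c × d, ∑ p : a × b, f p.1 p.2 q.1 q.2 := Finset.sum_comm
    _ = ∑ y : c, ∑ z : d, ∑ w : a, ∑ x : b, f w x y z := by
        simp only [Fintype.sum_prod_type]

lemma rearrange4 {ι κ : Type} [Fintype ι] [Fintype κ]
    (A B C D : κ → ι → ℂ) :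
    ∑ x : ι, ∑ y : ι, (∑ r : κ, A r y * B r x) * (∑ s : κ, C s y * D s x)
      = ∑ r : κ, ∑ s : κ, (∑ y : ι, A r y * C s y) * (∑ x : ι, B r x * D s x) := by
  calc ∑ x : ι, ∑ y : ι, (∑ r : κ, A r y * B r x) * (∑ s : κ, C s y * D s x)
      = ∑ x : ι, ∑ y : ι, ∑ r : κ, ∑ s : κ, (A r y * B r x) * (C s y * D s x) := by
        refine Finset.sum_congr rfl fun x _ => Finset.sum_congr rfl fun y _ => ?_
        rw [Finset.sum_mul_sum]
    _ = ∑ r : κ, ∑ s : κ, ∑ x : ι, ∑ y : ι, (A r y * B r x) * (C s y * D s x) :=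
        sum_comm4 _
    _ = ∑ r : κ, ∑ s : κ, (∑ y : ι, A r y * C s y) * (∑ x : ι, B r x * D s x) := by
        refine Finset.sum_congr rfl fun r _ => Finset.sum_congr rfl fun s _ => ?_
        rw [Finset.sum_mul_sum]
        rw [Finset.sum_comm]
        refine Finset.sum_congr rfl fun x _ => Finset.sum_congr rfl fun y _ => by ring

end Stmt15Aux

section Statements


variable {α₀ β₀ α₁ β₁ α₀' β₀' α₁' β₁' : Type}
variable [Fintype α₀] [DecidableEq α₀] [Fintype β₀] [DecidableEq β₀]
variable [Fintype α₁] [DecidableEq α₁] [Fintype β₁] [DecidableEq β₁]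
variable [Fintype α₀'] [DecidableEq α₀'] [Fintype β₀'] [DecidableEq β₀']
variable [Fintype α₁'] [DecidableEq α₁'] [Fintype β₁'] [DecidableEq β₁']

theorem stmt15 (K : ℕ) (hK : 1 ≤ K)
    (E : MatMap (Fin K × Fin K) (Fin K × Fin K)) (hE : IsSepChannel E) :
    ((choiBi (swapChannel K) * choiBi E).trace).re ≤ 1 / (K : ℝ) ^ 2 := by
  classical
  obtain ⟨⟨hlin, hcp, htp⟩, n, LA, LB, hprops, hdecomp⟩ := hE
  have hK0 : (K:ℂ) ≠ 0 := Nat.cast_ne_zero.mpr (by omega)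
  have hKr0 : (K:ℝ) ≠ 0 := Nat.cast_ne_zero.mpr (by omega)
  -- Gram decompositions of the Choi matrices of the factor maps
  have hCps : ∀ m, (tensorIdT (LA m) ((K:ℂ) • maxEntangled K K K)).PosSemidef :=
    fun m => (hprops m).2.1 K _ (posSemidef_KmaxEnt K hK)
  have hDps : ∀ m, (tensorIdT (LB m) ((K:ℂ) • maxEntangled K K K)).PosSemidef :=
    fun m => (hprops m).2.2.2 K _ (posSemidef_KmaxEnt K hK)
  choose X hX using fun m => psd_exists_conjTranspose_mul (hCps m)
  choose Y hY using fun m => psd_exists_conjTranspose_mul (hDps m)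
  have hC : ∀ m (y x : Fin K × Fin K),
      LA m (Matrix.single y.2 x.2 1) y.1 x.1
        = ∑ r : Fin K × Fin K, X m r x * star (X m r y) := by
    intro m y x
    rw [← tensorIdT_KmaxEnt hK (LA m) y x, hX m, Matrix.mul_apply]
    refine Finset.sum_congr rfl fun r _ => ?_
    rw [Matrix.conjTranspose_apply]; ring
  have hD : ∀ m (y x : Fin K × Fin K),
      LB m (Matrix.single y.2 x.2 1) y.1 x.1
        = ∑ s : Fin K × Fin K, Y m s x * star (Y m s y) := by
    intro m y x
    rw [← tensorIdT_KmaxEnt hK (LB m) y x, hY m, Matrix.mul_apply]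
    refine Finset.sum_congr rfl fun s _ => ?_
    rw [Matrix.conjTranspose_apply]; ring
  set z : Fin n → (Fin K × Fin K) → (Fin K × Fin K) → ℂ :=
    fun m r s => ∑ x : Fin K × Fin K, X m r x * Y m s x.swap with hz
  -- entrywise formulas for the two Choi matrices
  have hF : ∀ p q : (Fin K × Fin K) × (Fin K × Fin K),
      choiBi (swapChannel K) p q
        = ((K:ℂ)^2)⁻¹ *
            ((if p.2 = p.1.swap then 1 else 0) * (if q.2 = q.1.swap then 1 else 0)) := by
    intro p q
    rw [choiBi_apply', swapChannel_apply', Matrix.smul_apply]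
    simp only [Matrix.single, Matrix.of_apply, smul_eq_mul]
    congr 1
    by_cases h1 : p.2 = p.1.swap <;> by_cases h2 : q.2 = q.1.swap <;>
      simp [h1, h2, eq_comm]
  have hEA : ∀ p q : (Fin K × Fin K) × (Fin K × Fin K),
      choiBi E p q = ((K:ℂ)^2)⁻¹ *
        ∑ m, LA m (Matrix.single p.2.1 q.2.1 1) p.1.1 q.1.1 *
             LB m (Matrix.single p.2.2 q.2.2 1) p.1.2 q.1.2 := by
    intro p q
    rw [choiBi_apply', hdecomp, Matrix.sum_apply]
    simp only [tensorMap_smul_std, Matrix.smul_apply, Matrix.kroneckerMap_apply, smul_eq_mul]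
    rw [Finset.mul_sum]
  -- the trace as an explicit sum
  have e3 : ∀ m, (∑ y : Fin K × Fin K, ∑ x : Fin K × Fin K,
      LA m (Matrix.single y.2 x.2 1) y.1 x.1 *
      LB m (Matrix.single y.1 x.1 1) y.2 x.2)
      = ∑ r : Fin K × Fin K, ∑ s : Fin K × Fin K, z m r s * star (z m r s) := by
    intro m
    have hyx : ∀ y x : Fin K × Fin K,
        LB m (Matrix.single y.1 x.1 1) y.2 x.2
          = ∑ s : Fin K × Fin K, Y m s x.swap * star (Y m s y.swap) :=
      fun y x => hD m y.swap x.swap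
    simp only [hC, hyx]
    refine Eq.trans (rearrange4 (fun r v => X m r v) (fun r v => star (X m r v))
          (fun s v => Y m s v.swap) (fun s v => star (Y m s v.swap))) ?_
    refine Finset.sum_congr rfl fun r _ => Finset.sum_congr rfl fun s _ => ?_
    congr 1
    all_goals rw [hz]
    all_goals simp only [star_sum, star_mul']
  have hT : (choiBi (swapChannel K) * choiBi E).trace
      = (((K:ℂ)^2)⁻¹ * ((K:ℂ)^2)⁻¹) *
          ∑ m, ∑ r : Fin K × Fin K, ∑ s : Fin K × Fin K, z m r s * star (z m r s) := by
    have e1 : (choiBi (swapChannel K) * choiBi E).trace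
        = ∑ p : (Fin K × Fin K) × (Fin K × Fin K), ∑ q : (Fin K × Fin K) × (Fin K × Fin K),
            choiBi (swapChannel K) p q * choiBi E q p := by
      rw [Matrix.trace]
      simp [Matrix.mul_apply, Matrix.diag]
    have h1 : ∀ (G : (Fin K × Fin K) × (Fin K × Fin K) → ℂ) (e : Fin K × Fin K → Fin K × Fin K),
        (∑ p : (Fin K × Fin K) × (Fin K × Fin K), if p.2 = e p.1 then G p else 0)
          = ∑ x : Fin K × Fin K, G (x, e x) := by
      intro G e
      rw [Fintype.sum_prod_type]
      simp
    have step : ∀ (c : ℂ)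
        (W : (Fin K × Fin K) × (Fin K × Fin K) → (Fin K × Fin K) × (Fin K × Fin K) → ℂ),
        (∑ p : (Fin K × Fin K) × (Fin K × Fin K), ∑ q : (Fin K × Fin K) × (Fin K × Fin K),
          (c * ((if p.2 = p.1.swap then 1 else 0) * (if q.2 = q.1.swap then (1:ℂ) else 0)))
            * (c * W q p))
        = ∑ x : Fin K × Fin K, ∑ y : Fin K × Fin K, c * (c * W (y, y.swap) (x, x.swap)) := by
      intro c W
      calc (∑ p : (Fin K × Fin K) × (Fin K × Fin K), ∑ q : (Fin K × Fin K) × (Fin K × Fin K),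
          (c * ((if p.2 = p.1.swap then 1 else 0) * (if q.2 = q.1.swap then (1:ℂ) else 0)))
            * (c * W q p))
          = ∑ p : (Fin K × Fin K) × (Fin K × Fin K), (if p.2 = p.1.swap then
              (∑ q : (Fin K × Fin K) × (Fin K × Fin K),
                if q.2 = q.1.swap then c * (c * W q p) else 0) else 0) := by
            refine Finset.sum_congr rfl fun p _ => ?_
            by_cases hp : p.2 = p.1.swap
            · rw [if_pos hp, if_pos hp]
              refine Finset.sum_congr rfl fun q _ => ?_
              by_cases hq : q.2 = q.1.swap
              · rw [if_pos hq, if_pos hq]; ring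
              · rw [if_neg hq, if_neg hq]; ring
            · rw [if_neg hp, if_neg hp]
              simp
        _ = ∑ x : Fin K × Fin K, ∑ q : (Fin K × Fin K) × (Fin K × Fin K),
              (if q.2 = q.1.swap then c * (c * W q (x, x.swap)) else 0) := h1 _ Prod.swap
        _ = ∑ x : Fin K × Fin K, ∑ y : Fin K × Fin K, c * (c * W (y, y.swap) (x, x.swap)) :=
            Finset.sum_congr rfl fun x _ => h1 _ Prod.swap
    rw [e1]
    simp only [hF, hEA]
    refine Eq.trans (step (((K:ℂ)^2)⁻¹) fun q p => ∑ m,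
        LA m (Matrix.single q.2.1 p.2.1 1) q.1.1 p.1.1 *
        LB m (Matrix.single q.2.2 p.2.2 1) q.1.2 p.1.2) ?_
    show (∑ x : Fin K × Fin K, ∑ y : Fin K × Fin K, ((K:ℂ)^2)⁻¹ * (((K:ℂ)^2)⁻¹ *
        ∑ m, LA m (Matrix.single y.2 x.2 1) y.1 x.1 *
             LB m (Matrix.single y.1 x.1 1) y.2 x.2)) = _
    calc (∑ x : Fin K × Fin K, ∑ y : Fin K × Fin K, ((K:ℂ)^2)⁻¹ * (((K:ℂ)^2)⁻¹ *
        ∑ m, LA m (Matrix.single y.2 x.2 1) y.1 x.1 *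
             LB m (Matrix.single y.1 x.1 1) y.2 x.2))
        = (((K:ℂ)^2)⁻¹ * ((K:ℂ)^2)⁻¹) * ∑ x : Fin K × Fin K, ∑ y : Fin K × Fin K, ∑ m,
            LA m (Matrix.single y.2 x.2 1) y.1 x.1 *
            LB m (Matrix.single y.1 x.1 1) y.2 x.2 := by
          rw [Finset.mul_sum]
          refine Finset.sum_congr rfl fun x _ => ?_
          rw [Finset.mul_sum]
          refine Finset.sum_congr rfl fun y _ => by ring
      _ = (((K:ℂ)^2)⁻¹ * ((K:ℂ)^2)⁻¹) * ∑ m, ∑ y : Fin K × Fin K, ∑ x : Fin K × Fin K,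
            LA m (Matrix.single y.2 x.2 1) y.1 x.1 *
            LB m (Matrix.single y.1 x.1 1) y.2 x.2 := by
          rw [sum_comm3]
      _ = (((K:ℂ)^2)⁻¹ * ((K:ℂ)^2)⁻¹) *
          ∑ m, ∑ r : Fin K × Fin K, ∑ s : Fin K × Fin K, z m r s * star (z m r s) := by
          rw [Finset.sum_congr rfl fun m _ => e3 m]
  -- pass to real parts
  set a : Fin n → ℝ :=
    fun m => ∑ r : Fin K × Fin K, ∑ x : Fin K × Fin K, Complex.normSq (X m r x) with ha
  set b : Fin n → ℝ :=
    fun m => ∑ s : Fin K × Fin K, ∑ x : Fin K × Fin K, Complex.normSq (Y m s x) with hb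
  have hre : ((choiBi (swapChannel K) * choiBi E).trace).re
      = (((K:ℝ)^2)⁻¹ * ((K:ℝ)^2)⁻¹) *
          ∑ m, ∑ r : Fin K × Fin K, ∑ s : Fin K × Fin K, Complex.normSq (z m r s) := by
    rw [hT]
    have h2 : (∑ m, ∑ r : Fin K × Fin K, ∑ s : Fin K × Fin K, z m r s * star (z m r s))
        = ((∑ m, ∑ r : Fin K × Fin K, ∑ s : Fin K × Fin K, Complex.normSq (z m r s) : ℝ) : ℂ) := by
      push_cast
      refine Finset.sum_congr rfl fun m _ => Finset.sum_congr rfl fun r _ =>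
        Finset.sum_congr rfl fun s' _ => ?_
      rw [Complex.star_def, Complex.mul_conj]
    rw [h2, show (((K:ℂ)^2)⁻¹ * ((K:ℂ)^2)⁻¹) = ((((K:ℝ)^2)⁻¹ * ((K:ℝ)^2)⁻¹ : ℝ) : ℂ) by
      push_cast; ring]
    rw [← Complex.ofReal_mul, Complex.ofReal_re]
  -- Cauchy–Schwarz bound
  have hzb : ∀ m, (∑ r : Fin K × Fin K, ∑ s : Fin K × Fin K, Complex.normSq (z m r s))
      ≤ a m * b m := by
    intro m
    have h1 : ∀ r s : Fin K × Fin K, Complex.normSq (z m r s)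
        ≤ (∑ x : Fin K × Fin K, Complex.normSq (X m r x)) *
          (∑ x : Fin K × Fin K, Complex.normSq (Y m s x)) := by
      intro r s
      have h2 := cs_complex (fun x => X m r x) (fun x => Y m s x.swap)
      have h3 : (∑ x : Fin K × Fin K, Complex.normSq (Y m s x.swap))
          = ∑ x : Fin K × Fin K, Complex.normSq (Y m s x) :=
        Fintype.sum_equiv (Equiv.prodComm _ _) _ _ (fun x => rfl)
      rw [hz]
      calc Complex.normSq (∑ x : Fin K × Fin K, X m r x * Y m s x.swap)
          ≤ (∑ x : Fin K × Fin K, Complex.normSq (X m r x)) *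
            (∑ x : Fin K × Fin K, Complex.normSq (Y m s x.swap)) := h2
        _ = _ := by rw [h3]
    calc ∑ r : Fin K × Fin K, ∑ s : Fin K × Fin K, Complex.normSq (z m r s)
        ≤ ∑ r : Fin K × Fin K, ∑ s : Fin K × Fin K,
            (∑ x : Fin K × Fin K, Complex.normSq (X m r x)) *
            (∑ x : Fin K × Fin K, Complex.normSq (Y m s x)) :=
          Finset.sum_le_sum fun r _ => Finset.sum_le_sum fun s _ => h1 r s
      _ = a m * b m := by rw [ha, hb]; rw [← Finset.sum_mul_sum]
  -- trace preservation gives the normalization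
  have hTP : ∀ jl : Fin K × Fin K,
      (∑ m, (LA m (Matrix.single jl.1 jl.1 1)).trace *
            (LB m (Matrix.single jl.2 jl.2 1)).trace) = 1 := by
    intro jl
    have h := htp (Matrix.single jl jl 1)
    rw [hdecomp, Matrix.trace_sum] at h
    simp only [tensorMap_std, Matrix.trace_kronecker] at h
    have h2 : (Matrix.single jl jl (1:ℂ)).trace = 1 := by
      simp [Matrix.trace, Matrix.diag, Matrix.single, Finset.sum_ite_eq]
    rw [h2] at h
    exact h
  have haC : ∀ m, ((a m : ℝ) : ℂ)
      = ∑ j : Fin K, (LA m (Matrix.single j j 1)).trace := by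
    intro m
    have h1 : ∀ j : Fin K, (LA m (Matrix.single j j 1)).trace
        = ∑ i : Fin K, ∑ r : Fin K × Fin K, X m r (i,j) * star (X m r (i,j)) := by
      intro j
      rw [Matrix.trace]
      refine Finset.sum_congr rfl fun i _ => ?_
      have h2 := hC m (i,j) (i,j)
      simpa using h2
    calc ((a m : ℝ) : ℂ)
        = ∑ r : Fin K × Fin K, ∑ x : Fin K × Fin K, (X m r x * star (X m r x)) := by
          rw [ha]; push_cast
          refine Finset.sum_congr rfl fun r _ => Finset.sum_congr rfl fun x _ => ?_
          rw [Complex.star_def, Complex.mul_conj]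
      _ = ∑ j : Fin K, ∑ i : Fin K, ∑ r : Fin K × Fin K, (X m r (i,j) * star (X m r (i,j))) := by
          rw [show (∑ r : Fin K × Fin K, ∑ x : Fin K × Fin K, (X m r x * star (X m r x)))
              = ∑ r : Fin K × Fin K, ∑ i : Fin K, ∑ j : Fin K, (X m r (i,j) * star (X m r (i,j)))
            from Finset.sum_congr rfl fun r _ => Fintype.sum_prod_type _]
          exact sum_comm3 fun r i j => X m r (i,j) * star (X m r (i,j))
      _ = ∑ j : Fin K, (LA m (Matrix.single j j 1)).trace := by
          refine Finset.sum_congr rfl fun j _ => (h1 j).symm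
  have hbC : ∀ m, ((b m : ℝ) : ℂ)
      = ∑ j : Fin K, (LB m (Matrix.single j j 1)).trace := by
    intro m
    have h1 : ∀ j : Fin K, (LB m (Matrix.single j j 1)).trace
        = ∑ i : Fin K, ∑ s : Fin K × Fin K, Y m s (i,j) * star (Y m s (i,j)) := by
      intro j
      rw [Matrix.trace]
      refine Finset.sum_congr rfl fun i _ => ?_
      have h2 := hD m (i,j) (i,j)
      simpa using h2
    calc ((b m : ℝ) : ℂ)
        = ∑ s : Fin K × Fin K, ∑ x : Fin K × Fin K, (Y m s x * star (Y m s x)) := by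
          rw [hb]; push_cast
          refine Finset.sum_congr rfl fun s _ => Finset.sum_congr rfl fun x _ => ?_
          rw [Complex.star_def, Complex.mul_conj]
      _ = ∑ j : Fin K, ∑ i : Fin K, ∑ s : Fin K × Fin K, (Y m s (i,j) * star (Y m s (i,j))) := by
          rw [show (∑ s : Fin K × Fin K, ∑ x : Fin K × Fin K, (Y m s x * star (Y m s x)))
              = ∑ s : Fin K × Fin K, ∑ i : Fin K, ∑ j : Fin K, (Y m s (i,j) * star (Y m s (i,j)))
            from Finset.sum_congr rfl fun s _ => Fintype.sum_prod_type _]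
          exact sum_comm3 fun s i j => Y m s (i,j) * star (Y m s (i,j))
      _ = ∑ j : Fin K, (LB m (Matrix.single j j 1)).trace := by
          refine Finset.sum_congr rfl fun j _ => (h1 j).symm
  have hsum : ∑ m, a m * b m = (K:ℝ)^2 := by
    have hc : ((∑ m, a m * b m : ℝ) : ℂ) = (((K:ℝ)^2 : ℝ) : ℂ) := by
      push_cast
      calc ∑ m, (a m : ℂ) * (b m : ℂ)
          = ∑ m, (∑ j : Fin K, (LA m (Matrix.single j j 1)).trace) *
                 (∑ l : Fin K, (LB m (Matrix.single l l 1)).trace) := by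
            refine Finset.sum_congr rfl fun m _ => ?_
            rw [haC, hbC]
        _ = ∑ m, ∑ j : Fin K, ∑ l : Fin K,
              (LA m (Matrix.single j j 1)).trace *
              (LB m (Matrix.single l l 1)).trace := by
            refine Finset.sum_congr rfl fun m _ => ?_
            rw [Finset.sum_mul_sum]
        _ = ∑ l : Fin K, ∑ j : Fin K, ∑ m,
              (LA m (Matrix.single j j 1)).trace *
              (LB m (Matrix.single l l 1)).trace := sum_comm3 _
        _ = ∑ l : Fin K, ∑ j : Fin K, (1:ℂ) := by
            refine Finset.sum_congr rfl fun l _ => Finset.sum_congr rfl fun j _ => ?_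
            exact hTP (j, l)
        _ = ((K:ℕ):ℂ)^2 := by
            simp only [Finset.sum_const, Finset.card_univ, Fintype.card_fin, nsmul_eq_mul, mul_one]
            ring
    exact_mod_cast hc
  -- conclude
  rw [hre]
  have hS : (∑ m, ∑ r : Fin K × Fin K, ∑ s : Fin K × Fin K, Complex.normSq (z m r s))
      ≤ (K:ℝ)^2 := by
    calc (∑ m, ∑ r : Fin K × Fin K, ∑ s : Fin K × Fin K, Complex.normSq (z m r s))
        ≤ ∑ m, a m * b m := Finset.sum_le_sum fun m _ => hzb m
      _ = (K:ℝ)^2 := hsum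
  calc (((K:ℝ)^2)⁻¹ * ((K:ℝ)^2)⁻¹) *
        ∑ m, ∑ r : Fin K × Fin K, ∑ s : Fin K × Fin K, Complex.normSq (z m r s)
      ≤ (((K:ℝ)^2)⁻¹ * ((K:ℝ)^2)⁻¹) * (K:ℝ)^2 :=
        mul_le_mul_of_nonneg_left hS (by positivity)
    _ = 1 / (K:ℝ)^2 := by field_simp

end Statements

end DynEnt
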